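/- Let M ≥ 1, h = 1/M, Δt > 0, and let dᵐ, wᵐ, w^s, d^{s+1}, w^{s+1} : (ℤ/Mℤ)³ → ℝ³ be grid functions satisfying, at every grid point i, (d^{s+1}_i − dᵐ_i)/Δt = ((dᵐ_i + d^{s+1}_i)/2) × ((wᵐ_i + w^s_i)/2) and (w^{s+1}_i − wᵐ_i)/Δt = (Δ_h ((dᵐ + d^{s+1})/2))_i × ((dᵐ_i + d^{s+1}_i)/2). Then ½(‖w^{s+1}‖² + ‖∇_h d^{s+1}‖²) = ½(‖wᵐ‖² + ‖∇_h dᵐ‖²) + ½ ⟨w^{s+1} − wᵐ, w^{s+1} − w^s⟩. In particular, the deviation of the iterate's energy from ½(‖wᵐ‖² + ‖∇_h dᵐ‖²) is at most ½ ‖w^{s+1} − wᵐ‖ ‖w^{s+1} − w^s‖. -/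
import Mathlib


noncomputable section
open scoped BigOperators

/-- Forward difference `D⁺_j` of a periodic grid function on `(ℤ/Mℤ)³`. -/
def Dp {M : ℕ} (h : ℝ) (u : (Fin 3 → ZMod M) → Fin 3 → ℝ) (j : Fin 3)
    (i : Fin 3 → ZMod M) : Fin 3 → ℝ :=
  h⁻¹ • (u (i + Pi.single j 1) - u i)

/-- Backward difference `D⁻_j`. -/
def Dm {M : ℕ} (h : ℝ) (u : (Fin 3 → ZMod M) → Fin 3 → ℝ) (j : Fin 3)
    (i : Fin 3 → ZMod M) : Fin 3 → ℝ :=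
  h⁻¹ • (u i - u (i - Pi.single j 1))

/-- Discrete Laplacian `Δ_h = Σ_j D⁺_j D⁻_j`. -/
def lapl {M : ℕ} (h : ℝ) (u : (Fin 3 → ZMod M) → Fin 3 → ℝ)
    (i : Fin 3 → ZMod M) : Fin 3 → ℝ :=
  ∑ j, Dp h (Dm h u j) j i

/-- Squared discrete L² norm: `‖u‖² = h³ Σ_i |u(i)|²`. -/
def l2sq {M : ℕ} [NeZero M] (h : ℝ) (u : (Fin 3 → ZMod M) → Fin 3 → ℝ) : ℝ :=
  h ^ 3 * ∑ i, ∑ k, u i k ^ 2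

/-- Discrete L² norm. -/
def l2norm {M : ℕ} [NeZero M] (h : ℝ) (u : (Fin 3 → ZMod M) → Fin 3 → ℝ) : ℝ :=
  Real.sqrt (l2sq h u)

/-- Squared discrete L² norm of the backward gradient:
`‖∇_h u‖² = h³ Σ_i Σ_j |D⁻_j u(i)|²`. -/
def gradsq {M : ℕ} [NeZero M] (h : ℝ) (u : (Fin 3 → ZMod M) → Fin 3 → ℝ) : ℝ :=
  h ^ 3 * ∑ i, ∑ j, ∑ k, Dm h u j i k ^ 2

/-- Discrete L² inner product: `⟨u,v⟩ = h³ Σ_i u(i)·v(i)`. -/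
def l2inner {M : ℕ} [NeZero M] (h : ℝ) (u v : (Fin 3 → ZMod M) → Fin 3 → ℝ) : ℝ :=
  h ^ 3 * ∑ i, ∑ k, u i k * v i k

open Matrix

lemma sbp {M : ℕ} [NeZero M] (h : ℝ) (u v : (Fin 3 → ZMod M) → Fin 3 → ℝ) (j : Fin 3) :
    ∑ i, ∑ k, Dp h (Dm h u j) j i k * v i k
      = -∑ i, ∑ k, Dm h u j i k * Dm h v j i k := by
  set c : Fin 3 → ZMod M := Pi.single j 1 with hc
  set g : (Fin 3 → ZMod M) → Fin 3 → ℝ := Dm h u j with hg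
  have shift : ∑ i, ∑ k, h⁻¹ * (g (i + c) k * v i k)
      = ∑ i, ∑ k, h⁻¹ * (g i k * v (i - c) k) := by
    refine Fintype.sum_equiv (Equiv.addRight c) _ _ (fun i => ?_)
    simp [Equiv.coe_addRight]
  have expand : ∀ i, ∑ k, Dp h g j i k * v i k
      = (∑ k, h⁻¹ * (g (i + c) k * v i k)) - ∑ k, h⁻¹ * (g i k * v i k) := by
    intro i
    rw [← Finset.sum_sub_distrib]
    refine Finset.sum_congr rfl fun k _ => ?_
    simp only [Dp, Pi.smul_apply, Pi.sub_apply, smul_eq_mul]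
    ring
  calc ∑ i, ∑ k, Dp h g j i k * v i k
      = (∑ i, ∑ k, h⁻¹ * (g (i + c) k * v i k)) - ∑ i, ∑ k, h⁻¹ * (g i k * v i k) := by
        rw [← Finset.sum_sub_distrib]; exact Finset.sum_congr rfl fun i _ => expand i
    _ = (∑ i, ∑ k, h⁻¹ * (g i k * v (i - c) k)) - ∑ i, ∑ k, h⁻¹ * (g i k * v i k) := by
        rw [shift]
    _ = -∑ i, ∑ k, g i k * Dm h v j i k := by
        rw [← Finset.sum_sub_distrib, ← Finset.sum_neg_distrib]
        refine Finset.sum_congr rfl fun i _ => ?_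
        rw [← Finset.sum_sub_distrib, ← Finset.sum_neg_distrib]
        refine Finset.sum_congr rfl fun k _ => ?_
        simp only [Dm, Pi.smul_apply, Pi.sub_apply, smul_eq_mul]
        ring
    _ = -∑ i, ∑ k, Dm h u j i k * Dm h v j i k := rfl


/-- Energy identity for one step of the fixed point
iteration of the angular momentum scheme:
`½(‖wˢ⁺¹‖² + ‖∇_h dˢ⁺¹‖²) = ½(‖wᵐ‖² + ‖∇_h dᵐ‖²) + ½⟨wˢ⁺¹ − wᵐ, wˢ⁺¹ − wˢ⟩`,
and hence the energy deviation is at most `½‖wˢ⁺¹ − wᵐ‖ ‖wˢ⁺¹ − wˢ‖`. -/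
theorem iteration_energy_identity
    (M : ℕ) [NeZero M] (hM : 1 ≤ M) (h Δt : ℝ) (hh : h = 1 / M) (hΔt : 0 < Δt)
    (dm wm ws ds1 ws1 : (Fin 3 → ZMod M) → Fin 3 → ℝ)
    (heq1 : ∀ i, Δt⁻¹ • (ds1 i - dm i)
      = crossProduct ((2 : ℝ)⁻¹ • (dm i + ds1 i)) ((2 : ℝ)⁻¹ • (wm i + ws i)))
    (heq2 : ∀ i, Δt⁻¹ • (ws1 i - wm i)
      = crossProduct (lapl h (fun j => (2 : ℝ)⁻¹ • (dm j + ds1 j)) i)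
          ((2 : ℝ)⁻¹ • (dm i + ds1 i))) :
    (1 / 2 : ℝ) * (l2sq h ws1 + gradsq h ds1)
        = (1 / 2 : ℝ) * (l2sq h wm + gradsq h dm)
          + (1 / 2 : ℝ) * l2inner h (ws1 - wm) (ws1 - ws) ∧
    |(1 / 2 : ℝ) * (l2sq h ws1 + gradsq h ds1)
        - (1 / 2 : ℝ) * (l2sq h wm + gradsq h dm)|
      ≤ (1 / 2 : ℝ) * l2norm h (ws1 - wm) * l2norm h (ws1 - ws) := by
  have hMpos : (0:ℝ) < (M:ℝ) := by exact_mod_cast Nat.lt_of_lt_of_le Nat.zero_lt_one hM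
  have hpos : 0 < h := by rw [hh]; positivity
  set db : (Fin 3 → ZMod M) → Fin 3 → ℝ := fun i => (2:ℝ)⁻¹ • (dm i + ds1 i) with hdb
  set v : (Fin 3 → ZMod M) → Fin 3 → ℝ := fun i => ds1 i - dm i with hv
  -- pointwise: (ws1-wm)·(ws+wm) = 2 (Δ_h db)·v
  have hptA : ∀ i, (∑ k, (ws1 i k - wm i k) * (ws i k + wm i k))
      = 2 * ∑ k, lapl h db i k * v i k := by
    intro i
    have e2 : ws1 i - wm i = Δt • crossProduct (lapl h db i) (db i) := by
      have := congrArg (fun x => Δt • x) (heq2 i)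
      simpa [smul_smul, mul_inv_cancel₀ hΔt.ne', hdb] using this
    have e1 : crossProduct (db i) ((2:ℝ)⁻¹ • (wm i + ws i)) = Δt⁻¹ • (v i) :=
      (heq1 i).symm
    have hws : ws i + wm i = (2:ℝ) • ((2:ℝ)⁻¹ • (wm i + ws i)) := by
      rw [smul_smul, (by norm_num : (2:ℝ) * 2⁻¹ = 1), one_smul, add_comm]
    show (ws1 i - wm i) ⬝ᵥ (ws i + wm i) = 2 * ((lapl h db i) ⬝ᵥ (v i))
    rw [e2, hws, smul_dotProduct, dotProduct_smul, smul_eq_mul, smul_eq_mul,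
      dotProduct_comm, triple_product_permutation, e1, dotProduct_smul,
      smul_eq_mul]
    field_simp
  -- summation by parts for the laplacian term
  have hsbp : ∑ i, ∑ k, lapl h db i k * v i k
      = -∑ j, ∑ i, ∑ k, Dm h db j i k * Dm h v j i k := by
    have : ∀ i, ∑ k, lapl h db i k * v i k
        = ∑ j, ∑ k, Dp h (Dm h db j) j i k * v i k := by
      intro i
      rw [Finset.sum_comm]
      refine Finset.sum_congr rfl fun k _ => ?_
      rw [lapl, Finset.sum_apply, Finset.sum_mul]
    calc ∑ i, ∑ k, lapl h db i k * v i k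
        = ∑ i, ∑ j, ∑ k, Dp h (Dm h db j) j i k * v i k :=
          Finset.sum_congr rfl fun i _ => this i
      _ = ∑ j, ∑ i, ∑ k, Dp h (Dm h db j) j i k * v i k := Finset.sum_comm
      _ = ∑ j, -∑ i, ∑ k, Dm h db j i k * Dm h v j i k :=
          Finset.sum_congr rfl fun j _ => sbp h db v j
      _ = -∑ j, ∑ i, ∑ k, Dm h db j i k * Dm h v j i k := by
          rw [Finset.sum_neg_distrib]
  -- linearity of Dm
  have hDmdb : ∀ j i k, Dm h db j i k = 2⁻¹ * (Dm h dm j i k + Dm h ds1 j i k) := by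
    intro j i k
    simp only [Dm, hdb, Pi.smul_apply, Pi.sub_apply, Pi.add_apply, smul_eq_mul]
    ring
  have hDmv : ∀ j i k, Dm h v j i k = Dm h ds1 j i k - Dm h dm j i k := by
    intro j i k
    simp only [Dm, hv, Pi.smul_apply, Pi.sub_apply, smul_eq_mul]
    ring
  have hgr : ∑ j, ∑ i, ∑ k, Dm h db j i k * Dm h v j i k
      = 2⁻¹ * ((∑ i, ∑ j, ∑ k, Dm h ds1 j i k ^ 2) - ∑ i, ∑ j, ∑ k, Dm h dm j i k ^ 2) := by
    have swap : (∑ j, ∑ i, ∑ k, Dm h db j i k * Dm h v j i k)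
        = ∑ i, ∑ j, ∑ k, Dm h db j i k * Dm h v j i k := Finset.sum_comm
    have step : ∀ i, ∑ j, ∑ k, Dm h db j i k * Dm h v j i k
        = ∑ j, ∑ k, 2⁻¹ * (Dm h ds1 j i k ^ 2 - Dm h dm j i k ^ 2) := by
      intro i
      refine Finset.sum_congr rfl fun j _ => Finset.sum_congr rfl fun k _ => ?_
      rw [hDmdb, hDmv]; ring
    rw [swap, Finset.sum_congr rfl (fun i _ => step i)]
    simp only [← Finset.mul_sum, Finset.sum_sub_distrib, mul_sub]
  -- the key scalar identity
  have key : (∑ i, ∑ k, ws1 i k ^ 2) - (∑ i, ∑ k, wm i k ^ 2)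
      = (∑ i, ∑ k, (ws1 i k - wm i k) * (ws1 i k - ws i k))
        - ((∑ i, ∑ j, ∑ k, Dm h ds1 j i k ^ 2) - ∑ i, ∑ j, ∑ k, Dm h dm j i k ^ 2) := by
    have expand : (∑ i, ∑ k, ws1 i k ^ 2) - (∑ i, ∑ k, wm i k ^ 2)
        = (∑ i, ∑ k, (ws1 i k - wm i k) * (ws1 i k - ws i k))
          + ∑ i, ∑ k, (ws1 i k - wm i k) * (ws i k + wm i k) := by
      rw [← Finset.sum_sub_distrib, ← Finset.sum_add_distrib]
      refine Finset.sum_congr rfl fun i _ => ?_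
      rw [← Finset.sum_sub_distrib, ← Finset.sum_add_distrib]
      refine Finset.sum_congr rfl fun k _ => ?_
      ring
    have h2 : ∑ i, ∑ k, (ws1 i k - wm i k) * (ws i k + wm i k)
        = 2 * ∑ i, ∑ k, lapl h db i k * v i k := by
      rw [Finset.mul_sum]
      exact Finset.sum_congr rfl fun i _ => hptA i
    rw [expand, h2, hsbp, hgr]
    ring
  have innerq : l2inner h (ws1 - wm) (ws1 - ws)
      = h ^ 3 * ∑ i, ∑ k, (ws1 i k - wm i k) * (ws1 i k - ws i k) := by
    simp [l2inner]
  have part1 : (1 / 2 : ℝ) * (l2sq h ws1 + gradsq h ds1)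
      = (1 / 2 : ℝ) * (l2sq h wm + gradsq h dm)
        + (1 / 2 : ℝ) * l2inner h (ws1 - wm) (ws1 - ws) := by
    rw [innerq]
    simp only [l2sq, gradsq]
    linear_combination (h ^ 3 / 2) * key
  refine ⟨part1, ?_⟩
  rw [part1]
  have habs : |(1 / 2 : ℝ) * (l2sq h wm + gradsq h dm)
      + (1 / 2 : ℝ) * l2inner h (ws1 - wm) (ws1 - ws)
      - (1 / 2 : ℝ) * (l2sq h wm + gradsq h dm)|
      = (1/2) * |l2inner h (ws1 - wm) (ws1 - ws)| := by
    rw [add_sub_cancel_left, abs_mul]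
    norm_num
  rw [habs, mul_assoc]
  refine mul_le_mul_of_nonneg_left ?_ (by norm_num)
  -- Cauchy-Schwarz
  set f := ws1 - wm with hf
  set g := ws1 - ws with hgdef
  have h3nn : (0:ℝ) ≤ h ^ 3 := by positivity
  have hCS : (∑ i, ∑ k, f i k * g i k) ^ 2
      ≤ (∑ i, ∑ k, f i k ^ 2) * ∑ i, ∑ k, g i k ^ 2 := by
    have := Finset.sum_mul_sq_le_sq_mul_sq Finset.univ
      (fun p : (Fin 3 → ZMod M) × Fin 3 => f p.1 p.2)
      (fun p : (Fin 3 → ZMod M) × Fin 3 => g p.1 p.2)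
    simpa only [Fintype.sum_prod_type] using this
  have hA : (0:ℝ) ≤ ∑ i, ∑ k, f i k ^ 2 := by positivity
  have hS : |∑ i, ∑ k, f i k * g i k|
      ≤ Real.sqrt (∑ i, ∑ k, f i k ^ 2) * Real.sqrt (∑ i, ∑ k, g i k ^ 2) := by
    rw [← Real.sqrt_sq_eq_abs, ← Real.sqrt_mul hA]
    exact Real.sqrt_le_sqrt hCS
  simp only [l2inner, l2norm, l2sq]
  calc |h ^ 3 * ∑ i, ∑ k, f i k * g i k|
      = h ^ 3 * |∑ i, ∑ k, f i k * g i k| := by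
        rw [abs_mul, abs_of_nonneg h3nn]
    _ ≤ h ^ 3 * (Real.sqrt (∑ i, ∑ k, f i k ^ 2)
          * Real.sqrt (∑ i, ∑ k, g i k ^ 2)) := mul_le_mul_of_nonneg_left hS h3nn
    _ = Real.sqrt (h ^ 3 * ∑ i, ∑ k, f i k ^ 2)
          * Real.sqrt (h ^ 3 * ∑ i, ∑ k, g i k ^ 2) := by
        rw [Real.sqrt_mul h3nn, Real.sqrt_mul h3nn]
        have hmm : Real.sqrt (h ^ 3) * Real.sqrt (h ^ 3) = h ^ 3 :=
          Real.mul_self_sqrt h3nn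
        linear_combination -(Real.sqrt (∑ i, ∑ k, f i k ^ 2) *
          Real.sqrt (∑ i, ∑ k, g i k ^ 2)) * hmm
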